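/- The formal power series F(t) = (√q·t + √(q t² + 1))^{1/√q} ∈ Q[√q][[t]] (defined as exp((1/√q)·arcsinh(√q t)) = exp((1/√q) log(√q t + √(qt²+1)))) satisfies: F is the exponential generating function whose compositional structure is F = exp ∘ M where M(t) = (1/√q)·arcsinh(√q t) is the compositional inverse of S(t) = (1/√q)·sinh(√q t); i.e., S(M(t)) = t in Q[q][[t]], where sinh(√q t) = Σ_{n≥0} q^{n} t^{2n+1} √q/(2n+1)! appropriately interpreted so that S(t) = Σ_{n≥0} q^n t^{2n+1}/(2n+1)!. -/

import Mathlib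

/-- Composition of formal power series (valid when the constant coefficient of `g`
vanishes): the coefficient of `tⁿ` in `f(g(t))` is `Σ_{k≤n} f_k · [tⁿ](g^k)`. -/
noncomputable def pscomp {R : Type*} [CommSemiring R] (f g : PowerSeries R) : PowerSeries R :=
  PowerSeries.mk fun n =>
    ∑ k ∈ Finset.range (n + 1), PowerSeries.coeff (R := R) k f * PowerSeries.coeff (R := R) n (g ^ k)

/-- The series `S(t) = Σ_{n≥0} q^n t^{2n+1}/(2n+1)!` (formally `sinh(√q·t)/√q`)
over `ℚ[q]`. -/
noncomputable def S18 : PowerSeries (Polynomial ℚ) :=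
  PowerSeries.mk fun n =>
    if n % 2 = 1 then Polynomial.C ((1 : ℚ) / n.factorial) * Polynomial.X ^ (n / 2) else 0

open PowerSeries Finset

lemma coeff_pow_congr {R : Type*} [CommRing R] {f g : PowerSeries R}
    (hf : constantCoeff (R := R) f = 0) (hg : constantCoeff (R := R) g = 0) {n : ℕ}
    (h : ∀ i, i < n → coeff (R := R) i f = coeff (R := R) i g) :
    ∀ k m, m ≤ n → (m < n ∨ 2 ≤ k) → coeff (R := R) m (f ^ k) = coeff (R := R) m (g ^ k) := by
  intro k
  induction k with
  | zero => intro m _ _; rfl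
  | succ k ih =>
    intro m hm hcond
    rw [pow_succ', pow_succ', PowerSeries.coeff_mul, PowerSeries.coeff_mul]
    apply Finset.sum_congr rfl
    intro p hp
    rw [Finset.HasAntidiagonal.mem_antidiagonal] at hp
    rcases Nat.eq_zero_or_pos p.1 with h1 | h1
    · have hcf : coeff (R := R) p.1 f = 0 := by
        rw [h1, PowerSeries.coeff_zero_eq_constantCoeff]; exact hf
      have hcg : coeff (R := R) p.1 g = 0 := by
        rw [h1, PowerSeries.coeff_zero_eq_constantCoeff]; exact hg
      rw [hcf, hcg, zero_mul, zero_mul]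
    · have hp2 : p.2 < n := by omega
      by_cases hlt : p.1 < n
      · rw [h p.1 hlt, ih p.2 (le_of_lt hp2) (Or.inl hp2)]
      · -- p.1 = n = m, p.2 = 0, and k ≥ 1
        have hk : 1 ≤ k := by
          rcases hcond with hc | hc
          · omega
          · omega
        have hp20 : p.2 = 0 := by omega
        have hzf : coeff (R := R) p.2 (f ^ k) = 0 := by
          rw [hp20, PowerSeries.coeff_zero_eq_constantCoeff, map_pow, hf,
            zero_pow (by omega)]
        have hzg : coeff (R := R) p.2 (g ^ k) = 0 := by
          rw [hp20, PowerSeries.coeff_zero_eq_constantCoeff, map_pow, hg,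
            zero_pow (by omega)]
        rw [hzf, hzg, mul_zero, mul_zero]

/-- Coefficients of the compositional inverse, defined by strong recursion. -/
noncomputable def Mc : ℕ → Polynomial ℚ
  | n => (if n = 1 then 1 else 0) -
      ∑ k ∈ Finset.Ico 2 (n + 1),
        PowerSeries.coeff (R := Polynomial ℚ) k S18 *
          PowerSeries.coeff (R := Polynomial ℚ) n
            ((PowerSeries.mk fun i => if _ : i < n then Mc i else 0) ^ k)
  termination_by n => n
  decreasing_by assumption

lemma Mc_def (n : ℕ) : Mc n = (if n = 1 then 1 else 0) -
    ∑ k ∈ Finset.Ico 2 (n + 1),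
      PowerSeries.coeff (R := Polynomial ℚ) k S18 *
        PowerSeries.coeff (R := Polynomial ℚ) n
          ((PowerSeries.mk fun i => if _ : i < n then Mc i else 0) ^ k) := by
  rw [Mc]

lemma Mc_zero : Mc 0 = 0 := by
  rw [Mc_def]; simp

lemma coeff_pscomp {R : Type*} [CommSemiring R] (f g : PowerSeries R) (n : ℕ) :
    coeff (R := R) n (pscomp f g) =
      ∑ k ∈ Finset.range (n + 1), coeff (R := R) k f * coeff (R := R) n (g ^ k) := by
  simp [pscomp]

lemma S18_coeff_zero : coeff (R := Polynomial ℚ) 0 S18 = 0 := by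
  simp [S18]

lemma S18_coeff_one : coeff (R := Polynomial ℚ) 1 S18 = 1 := by
  simp [S18]

lemma key (g : PowerSeries (Polynomial ℚ)) (n : ℕ) (hn : 1 ≤ n) :
    coeff (R := Polynomial ℚ) n (pscomp S18 g) =
      coeff (R := Polynomial ℚ) n g +
        ∑ k ∈ Finset.Ico 2 (n + 1),
          coeff (R := Polynomial ℚ) k S18 * coeff (R := Polynomial ℚ) n (g ^ k) := by
  rw [coeff_pscomp, Finset.range_eq_Ico,
    ← Finset.sum_Ico_consecutive _ (by omega : (0:ℕ) ≤ 2) (by omega : 2 ≤ n + 1)]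
  congr 1
  have : Finset.Ico 0 2 = {0, 1} := by decide
  rw [this]
  simp [S18_coeff_zero, S18_coeff_one]

/-- The candidate inverse series. -/
noncomputable def Mser : PowerSeries (Polynomial ℚ) := PowerSeries.mk Mc

lemma Mser_const : constantCoeff (R := Polynomial ℚ) Mser = 0 := by
  rw [← PowerSeries.coeff_zero_eq_constantCoeff]
  simp [Mser, Mc_zero]

lemma trunc_const (n : ℕ) :
    constantCoeff (R := Polynomial ℚ)
      (PowerSeries.mk fun i => if _ : i < n then Mc i else 0) = 0 := by
  rw [← PowerSeries.coeff_zero_eq_constantCoeff]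
  by_cases h : 0 < n <;> simp [h, Mc_zero]

lemma pow_agree (N : PowerSeries (Polynomial ℚ))
    (hN0 : constantCoeff (R := Polynomial ℚ) N = 0) (n : ℕ)
    (hI : ∀ i, i < n → coeff (R := Polynomial ℚ) i N = Mc i) (k : ℕ) (hk : 2 ≤ k) :
    coeff (R := Polynomial ℚ) n (N ^ k) =
      coeff (R := Polynomial ℚ) n
        ((PowerSeries.mk fun i => if _ : i < n then Mc i else 0) ^ k) := by
  refine coeff_pow_congr hN0 (trunc_const n) ?_ k n le_rfl (Or.inr hk)
  intro i hi
  rw [hI i hi, PowerSeries.coeff_mk, dif_pos hi]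

lemma coeff_N_eq (N : PowerSeries (Polynomial ℚ))
    (hN0 : constantCoeff (R := Polynomial ℚ) N = 0)
    (hNc : pscomp S18 N = PowerSeries.X) :
    ∀ n, coeff (R := Polynomial ℚ) n N = Mc n := by
  intro n
  induction n using Nat.strong_induction_on with
  | _ n ih =>
    rcases Nat.eq_zero_or_pos n with rfl | hn
    · rw [PowerSeries.coeff_zero_eq_constantCoeff, hN0, Mc_zero]
    · have h1 : coeff (R := Polynomial ℚ) n (pscomp S18 N) = coeff (R := Polynomial ℚ) n PowerSeries.X := by
        rw [hNc]
      rw [key N n hn, PowerSeries.coeff_X] at h1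
      have h2 : ∀ k ∈ Finset.Ico 2 (n + 1),
          coeff (R := Polynomial ℚ) k S18 * coeff (R := Polynomial ℚ) n (N ^ k) =
          coeff (R := Polynomial ℚ) k S18 *
            coeff (R := Polynomial ℚ) n
              ((PowerSeries.mk fun i => if _ : i < n then Mc i else 0) ^ k) := by
        intro k hk
        rw [Finset.mem_Ico] at hk
        rw [pow_agree N hN0 n ih k hk.1]
      rw [Finset.sum_congr rfl h2] at h1
      rw [Mc_def, eq_sub_iff_add_eq]
      exact h1

theorem stmt18 :
    ∃! M : PowerSeries (Polynomial ℚ),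
      PowerSeries.constantCoeff (R := Polynomial ℚ) M = 0 ∧ pscomp S18 M = PowerSeries.X := by
  refine ⟨Mser, ⟨Mser_const, ?_⟩, ?_⟩
  · ext n
    rcases Nat.eq_zero_or_pos n with rfl | hn
    · rw [coeff_pscomp]
      simp [S18_coeff_zero, PowerSeries.coeff_X]
    · rw [key Mser n hn, PowerSeries.coeff_X]
      have hI : ∀ i, i < n → PowerSeries.coeff (R := Polynomial ℚ) i Mser = Mc i := by
        intro i _; simp [Mser]
      have h2 : ∀ k ∈ Finset.Ico 2 (n + 1),
          PowerSeries.coeff (R := Polynomial ℚ) k S18 *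
              PowerSeries.coeff (R := Polynomial ℚ) n (Mser ^ k) =
          PowerSeries.coeff (R := Polynomial ℚ) k S18 *
            PowerSeries.coeff (R := Polynomial ℚ) n
              ((PowerSeries.mk fun i => if _ : i < n then Mc i else 0) ^ k) := by
        intro k hk
        rw [Finset.mem_Ico] at hk
        rw [pow_agree Mser Mser_const n hI k hk.1]
      rw [Finset.sum_congr rfl h2]
      have : PowerSeries.coeff (R := Polynomial ℚ) n Mser = Mc n := by simp [Mser]
      rw [this, Mc_def, sub_add_cancel]
  · rintro N ⟨hN0, hNc⟩
    ext n
    rw [coeff_N_eq N hN0 hNc n]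
    simp [Mser]
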